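/- Let E be a real vector space with a separating seminorm family (P_m)_{m<λ} which is approximately ultrahomogeneous, and let 1 ≤ n ≤ λ be finite. Then the following are equivalent: (i) for all finite-dimensional subspaces X, Y of E (each equipped with the first n seminorms of E) and every ε > 0, there exists a finite-dimensional subspace Z of E such that every n-continuous colouring of Emb(X,Z) admits γ ∈ Emb(Y,Z) with oscillation of the colouring on γ ∘ Emb(X,Y) at most ε; (ii) for all such X, Y, every ε > 0 and every n-continuous colouring c of Emb(X,E), there exists γ ∈ Emb(Y,E) such that the oscillation of c on γ ∘ Emb(X,Y) is at most ε. -/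

import Mathlib

open Filter Topology

/-- `EmbSub P X W n`: injective linear maps between the subspaces `X` and `W` of the
ambient space preserving the first `n` (restricted) seminorms. -/
def EmbSub {E : Type} [AddCommGroup E] [Module ℝ E] (P : ℕ → Seminorm ℝ E)
    (X W : Submodule ℝ E) (n : ℕ) : Set (X →ₗ[ℝ] W) :=
  {φ | Function.Injective φ ∧ ∀ k < n, ∀ x : X, P k ((φ x : E)) = P k (x : E)}

/-- `EmbFull P X n`: injective linear maps from the subspace `X` into the ambient space
preserving the first `n` seminorms. -/
def EmbFull {E : Type} [AddCommGroup E] [Module ℝ E] (P : ℕ → Seminorm ℝ E)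
    (X : Submodule ℝ E) (n : ℕ) : Set (X →ₗ[ℝ] E) :=
  {φ | Function.Injective φ ∧ ∀ k < n, ∀ x : X, P k (φ x) = P k (x : E)}

/-- Approximate ultrahomogeneity of `E` with respect to its seminorm family
`(P k)_{k < lam}`. -/
def ApproxUltraHomog (E : Type) [AddCommGroup E] [Module ℝ E]
    (P : ℕ → Seminorm ℝ E) (lam : ℕ∞) : Prop :=
  ∀ X : Submodule ℝ E, FiniteDimensional ℝ X →
    ∀ l : ℕ∞, l ≤ lam →
    ∀ γ η : X →ₗ[ℝ] E, Function.Injective γ → Function.Injective η →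
    (∀ k : ℕ, (k : ℕ∞) < l → ∀ x : X, P k (γ x) = P k (x : E)) →
    (∀ k : ℕ, (k : ℕ∞) < l → ∀ x : X, P k (η x) = P k (x : E)) →
    ∀ ε : ℝ, 0 < ε →
    ∃ g : E ≃ₗ[ℝ] E, (∀ k : ℕ, (k : ℕ∞) < lam → ∀ y : E, P k (g y) = P k y) ∧
      ∀ k : ℕ, (k : ℕ∞) < l → ∀ x : X, P k (x : E) ≤ 1 → P k (g (γ x) - η x) ≤ ε

/-- Total boundedness of sets with bounded differences, with respect to a seminorm on a
finite-dimensional real vector space. -/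
lemma stmt11_netlemma {V : Type} [AddCommGroup V] [Module ℝ V] [FiniteDimensional ℝ V]
    (q : Seminorm ℝ V) (B : Set V) (hB : ∀ s ∈ B, ∀ t ∈ B, q (s - t) ≤ 2)
    {δ : ℝ} (hδ : 0 < δ) :
    ∃ F : Set V, F.Finite ∧ (∀ t ∈ F, t ∈ B) ∧ ∀ s ∈ B, ∃ t ∈ F, q (s - t) ≤ δ := by
  rcases B.eq_empty_or_nonempty with hBe | ⟨T₀, hT₀⟩
  · exact ⟨∅, Set.finite_empty, by simp, by simp [hBe]⟩
  classical
  -- kernel of q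
  set N : Submodule ℝ V :=
    { carrier := {x | q x = 0}
      add_mem' := fun {a b} (ha : q a = 0) (hb : q b = 0) => le_antisymm
        (by simpa [ha, hb] using map_add_le_add q a b) (apply_nonneg q _)
      zero_mem' := map_zero q
      smul_mem' := fun c x (hx : q x = 0) => by
        show q (c • x) = 0
        rw [map_smul_eq_mul, hx, mul_zero] } with hNdef
  have hNq : ∀ x ∈ N, q x = 0 := fun x hx => hx
  obtain ⟨M, hM⟩ := Submodule.exists_isCompl N
  -- norm structure on M
  letI : NormedAddCommGroup M := AddGroupNorm.toNormedAddCommGroup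
    { toFun := fun m => q m
      map_zero' := by simp
      add_le' := fun a b => by simpa using map_add_le_add q (a : V) (b : V)
      neg' := fun a => by simpa using map_neg_eq_map q (a : V)
      eq_zero_of_map_eq_zero' := fun m hm => by
        have : (m : V) ∈ N ⊓ M := ⟨hm, m.2⟩
        rw [hM.inf_eq_bot] at this
        exact Subtype.ext (by simpa using this) }
  have hnorm : ∀ m : M, ‖m‖ = q m := fun m => rfl
  letI : NormedSpace ℝ M := ⟨fun c m => by
    rw [hnorm, hnorm]
    show q ((c • m : M) : V) ≤ _
    rw [Submodule.coe_smul, map_smul_eq_mul, Real.norm_eq_abs]⟩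
  -- compactness of the ball in M
  have hcb : IsCompact (Metric.closedBall (0 : M) 2) := isCompact_closedBall _ _
  obtain ⟨G, hGfin, hGcov⟩ := (Metric.totallyBounded_iff.mp hcb.totallyBounded) (δ/2)
    (by linarith)
  -- choose representatives in B
  set pick : M → V := fun y => if h : ∃ b ∈ B, q (b - (T₀ + y)) < δ/2 then h.choose else T₀
    with hpick
  refine ⟨pick '' G, hGfin.image _, ?_, ?_⟩
  · rintro t ⟨y, -, rfl⟩
    by_cases h : ∃ b ∈ B, q (b - (T₀ + y)) < δ/2
    · simp only [hpick, dif_pos h]; exact h.choose_spec.1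
    · simp only [hpick, dif_neg h]; exact hT₀
  · intro s hs
    -- decompose s - T₀
    obtain ⟨nv, mv, hnv, hmv, hsum⟩ :=
      Submodule.codisjoint_iff_exists_add_eq.mp hM.codisjoint (s - T₀)
    have hqm : q mv ≤ 2 := by
      have h1 : q mv ≤ q (s - T₀) := by
        have : mv = (s - T₀) - nv := by rw [← hsum]; abel
        rw [this]
        calc q ((s - T₀) - nv) ≤ q (s - T₀) + q (-nv) := by
              simpa [sub_eq_add_neg] using map_add_le_add q (s - T₀) (-nv)
          _ = q (s - T₀) := by rw [map_neg_eq_map, hNq nv hnv, add_zero]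
      exact h1.trans (hB s hs T₀ hT₀)
    have hmball : (⟨mv, hmv⟩ : M) ∈ Metric.closedBall (0 : M) 2 := by
      simp only [Metric.mem_closedBall, dist_zero_right]
      rw [hnorm]; exact hqm
    obtain ⟨y, hyG, hy⟩ := Set.mem_iUnion₂.mp (hGcov hmball)
    have hdist : q (mv - (y : V)) < δ/2 := by
      have := Metric.mem_ball.mp hy
      rw [dist_eq_norm] at this
      simpa [hnorm] using this
    -- s is close to T₀ + y
    have hclose : q (s - (T₀ + y)) < δ/2 := by
      have heq : s - (T₀ + (y : V)) = nv + (mv - y) := by rw [← sub_sub, ← hsum]; abel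
      rw [heq]
      calc q (nv + (mv - y)) ≤ q nv + q (mv - y) := map_add_le_add q _ _
        _ = q (mv - y) := by rw [hNq nv hnv, zero_add]
        _ < δ/2 := hdist
    have hex : ∃ b ∈ B, q (b - (T₀ + (y : V))) < δ/2 := ⟨s, hs, hclose⟩
    refine ⟨pick y, ⟨y, hyG, rfl⟩, ?_⟩
    have hpy : q (pick y - (T₀ + (y : V))) < δ/2 := by
      simp only [hpick, dif_pos hex]
      exact hex.choose_spec.2
    calc q (s - pick y) ≤ q (s - (T₀ + y)) + q ((T₀ + (y : V)) - pick y) := by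
          have : s - pick y = (s - (T₀ + (y : V))) + ((T₀ + (y : V)) - pick y) := by abel
          rw [this]; exact map_add_le_add q _ _
      _ = q (s - (T₀ + y)) + q (pick y - (T₀ + (y : V))) := by
          rw [← map_neg_eq_map q (T₀ + (y : V) - pick y), neg_sub]
      _ ≤ δ/2 + δ/2 := add_le_add hclose.le hpy.le
      _ = δ := by ring

/-- The sup-seminorm on the space of "bounded" linear maps between two subspaces. -/
lemma stmt11_qsem_exists {E : Type} [AddCommGroup E] [Module ℝ E] (P : ℕ → Seminorm ℝ E)
    (n : ℕ) (X Y : Submodule ℝ E) :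
    ∃ (V₀ : Submodule ℝ (X →ₗ[ℝ] Y)) (q : Seminorm ℝ V₀),
      (∀ T : X →ₗ[ℝ] Y, T ∈ EmbSub P X Y n → T ∈ V₀) ∧
      (∀ (T : V₀) (k : ℕ), k < n → ∀ x : X, P k (x : E) ≤ 1 → P k ((T.1 x : E)) ≤ q T) ∧
      (∀ (T : V₀) (b : ℝ), 0 ≤ b →
        (∀ k < n, ∀ x : X, P k (x : E) ≤ 1 → P k ((T.1 x : E)) ≤ b) → q T ≤ b) := by
  classical
  set A : (X →ₗ[ℝ] Y) → Set ℝ := fun T =>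
    insert 0 {r | ∃ k < n, ∃ x : X, P k (x : E) ≤ 1 ∧ r = P k ((T x : E))} with hA
  have hA0 : ∀ T, (0 : ℝ) ∈ A T := fun T => Set.mem_insert 0 _
  have hAne : ∀ T, (A T).Nonempty := fun T => ⟨0, hA0 T⟩
  have hmem : ∀ (T : X →ₗ[ℝ] Y) (k : ℕ), k < n → ∀ x : X, P k (x : E) ≤ 1 →
      P k ((T x : E)) ∈ A T := fun T k hk x hx =>
    Set.mem_insert_of_mem _ ⟨k, hk, x, hx, rfl⟩
  have hle : ∀ (T : X →ₗ[ℝ] Y) (b : ℝ), 0 ≤ b →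
      (∀ k < n, ∀ x : X, P k (x : E) ≤ 1 → P k ((T x : E)) ≤ b) →
      ∀ r ∈ A T, r ≤ b := by
    rintro T b hb hbd r (rfl | ⟨k, hk, x, hx, rfl⟩)
    · exact hb
    · exact hbd k hk x hx
  set V₀ : Submodule ℝ (X →ₗ[ℝ] Y) :=
    { carrier := {T | BddAbove (A T)}
      zero_mem' := by
        refine ⟨0, ?_⟩
        rintro r (rfl | ⟨k, hk, x, hx, rfl⟩)
        · rfl
        · simp
      add_mem' := by
        rintro a b ⟨Ma, hMa⟩ ⟨Mb, hMb⟩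
        refine ⟨Ma + Mb, ?_⟩
        rintro r (rfl | ⟨k, hk, x, hx, rfl⟩)
        · exact add_nonneg (hMa (hA0 a)) (hMb (hA0 b))
        · calc P k (((a + b) x : Y) : E) = P k ((a x : E) + (b x : E)) := by
                simp [LinearMap.add_apply]
            _ ≤ P k ((a x : E)) + P k ((b x : E)) := map_add_le_add _ _ _
            _ ≤ Ma + Mb := add_le_add (hMa (hmem a k hk x hx)) (hMb (hmem b k hk x hx))
      smul_mem' := by
        rintro c a ⟨Ma, hMa⟩
        refine ⟨|c| * Ma, ?_⟩
        rintro r (rfl | ⟨k, hk, x, hx, rfl⟩)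
        · exact mul_nonneg (abs_nonneg c) (le_trans le_rfl (hMa (hA0 a)))
        · calc P k (((c • a) x : Y) : E) = P k (c • (a x : E)) := by
                simp [LinearMap.smul_apply]
            _ = |c| * P k ((a x : E)) := by
                rw [map_smul_eq_mul]; simp [Real.norm_eq_abs]
            _ ≤ |c| * Ma := mul_le_mul_of_nonneg_left (hMa (hmem a k hk x hx)) (abs_nonneg c) }
    with hV₀
  have hbdd : ∀ T : V₀, BddAbove (A T.1) := fun T => T.2
  have hqnn : ∀ T : V₀, 0 ≤ sSup (A T.1) := fun T => le_csSup (hbdd T) (hA0 T.1)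
  have hz : sSup (A (0 : V₀).1) = 0 := by
    refine le_antisymm (csSup_le (hAne 0) ?_) (hqnn 0)
    rintro r (rfl | ⟨k, hk, x, hx, rfl⟩)
    · rfl
    · simp
  have hadd : ∀ a b : V₀, sSup (A (a + b).1) ≤ sSup (A a.1) + sSup (A b.1) := by
    intro a b
    refine csSup_le (hAne _) ?_
    rintro r (rfl | ⟨k, hk, x, hx, rfl⟩)
    · exact add_nonneg (hqnn a) (hqnn b)
    · calc P k (((a + b).1 x : Y) : E) = P k ((a.1 x : E) + (b.1 x : E)) := by
            simp [LinearMap.add_apply]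
        _ ≤ P k ((a.1 x : E)) + P k ((b.1 x : E)) := map_add_le_add _ _ _
        _ ≤ sSup (A a.1) + sSup (A b.1) :=
            add_le_add (le_csSup (hbdd a) (hmem a.1 k hk x hx))
              (le_csSup (hbdd b) (hmem b.1 k hk x hx))
  have hneg : ∀ a : V₀, sSup (A (-a).1) = sSup (A a.1) := by
    intro a
    have : A (-a).1 = A a.1 := by
      have hset : ∀ k x, (P k (((-a).1 x : Y) : E)) = P k ((a.1 x : E)) := by
        intro k x
        have : ((-a).1 x : E) = -(a.1 x : E) := by simp [LinearMap.neg_apply]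
        rw [this, map_neg_eq_map]
      ext r
      constructor
      · rintro (rfl | ⟨k, hk, x, hx, rfl⟩)
        · exact hA0 _
        · exact (hset k x) ▸ hmem a.1 k hk x hx
      · rintro (rfl | ⟨k, hk, x, hx, rfl⟩)
        · exact hA0 _
        · exact (hset k x).symm ▸ hmem (-a).1 k hk x hx
    simp only [this]
  have hsmul : ∀ (c : ℝ) (a : V₀), sSup (A (c • a).1) = ‖c‖ * sSup (A a.1) := by
    intro c a
    rcases eq_or_ne c 0 with rfl | hc
    · have h0 : ((0 : ℝ) • a) = (0 : V₀) := zero_smul ℝ a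
      rw [h0]
      simp only [norm_zero, zero_mul]
      refine le_antisymm (csSup_le (hAne 0) ?_) (hqnn 0)
      rintro r (rfl | ⟨k, hk, x, hx, rfl⟩)
      · rfl
      · simp
    · have habs : (0 : ℝ) < |c| := abs_pos.mpr hc
      have key : ∀ k x, P k (((c • a).1 x : Y) : E) = |c| * P k ((a.1 x : E)) := by
        intro k x
        have : ((c • a).1 x : E) = c • (a.1 x : E) := by simp [LinearMap.smul_apply]
        rw [this, map_smul_eq_mul]; simp [Real.norm_eq_abs]
      refine le_antisymm ?_ ?_
      · refine csSup_le (hAne _) ?_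
        rintro r (rfl | ⟨k, hk, x, hx, rfl⟩)
        · exact mul_nonneg (norm_nonneg c) (hqnn a)
        · rw [key k x, Real.norm_eq_abs]
          exact mul_le_mul_of_nonneg_left (le_csSup (hbdd a) (hmem a.1 k hk x hx)) habs.le
      · rw [Real.norm_eq_abs]
        have h1 : sSup (A a.1) ≤ |c|⁻¹ * sSup (A (c • a).1) := by
          refine csSup_le (hAne _) ?_
          rintro r (rfl | ⟨k, hk, x, hx, rfl⟩)
          · exact mul_nonneg (inv_nonneg.mpr habs.le) (hqnn (c • a))
          · have h2 : |c| * P k ((a.1 x : E)) ≤ sSup (A (c • a).1) := by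
              rw [← key k x]
              exact le_csSup (hbdd (c • a)) (hmem (c • a).1 k hk x hx)
            calc P k ((a.1 x : E)) = |c|⁻¹ * (|c| * P k ((a.1 x : E))) := by
                  field_simp
              _ ≤ |c|⁻¹ * sSup (A (c • a).1) :=
                  mul_le_mul_of_nonneg_left h2 (inv_nonneg.mpr habs.le)
        calc |c| * sSup (A a.1) ≤ |c| * (|c|⁻¹ * sSup (A (c • a).1)) :=
              mul_le_mul_of_nonneg_left h1 habs.le
          _ = sSup (A (c • a).1) := by field_simp
  refine ⟨V₀, ({ toFun := fun T => sSup (A T.1)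
                 map_zero' := hz
                 add_le' := hadd
                 neg' := hneg
                 smul' := hsmul } : Seminorm ℝ V₀), ?_, ?_, ?_⟩
  · intro T hT
    refine ⟨1, ?_⟩
    rintro r (rfl | ⟨k, hk, x, hx, rfl⟩)
    · exact zero_le_one
    · rw [hT.2 k hk x]; exact hx
  · intro T k hk x hx
    exact le_csSup (hbdd T) (hmem T.1 k hk x hx)
  · intro T b hb hbd
    exact csSup_le (hAne T.1) (hle T.1 b hb hbd)

set_option maxHeartbeats 1000000 in
/-- for an approximately ultrahomogeneous space `E`, the continuous
approximate Ramsey property of `Age_n(E)` is equivalent to its "infinite" version with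
target `E` itself. -/
theorem stmt_11 {E : Type} [AddCommGroup E] [Module ℝ E]
    (lam : ℕ∞) (P : ℕ → Seminorm ℝ E)
    (hsep : ∀ x : E, x ≠ 0 → ∃ k : ℕ, (k : ℕ∞) < lam ∧ P k x ≠ 0)
    (hauh : ApproxUltraHomog E P lam)
    (n : ℕ) (hn : 1 ≤ n) (hnlam : (n : ℕ∞) ≤ lam) :
    (∀ X Y : Submodule ℝ E, FiniteDimensional ℝ X → FiniteDimensional ℝ Y →
        ∀ ε : ℝ, 0 < ε →
        ∃ Z : Submodule ℝ E, FiniteDimensional ℝ Z ∧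
          ∀ c : (X →ₗ[ℝ] Z) → ℝ,
            (∀ φ ∈ EmbSub P X Z n, c φ ∈ Set.Icc (0 : ℝ) 1) →
            (∀ φ ∈ EmbSub P X Z n, ∀ ψ ∈ EmbSub P X Z n, ∀ ε' : ℝ,
              (∀ k < n, ∀ x : X, P k (x : E) ≤ 1 → P k ((φ x : E) - (ψ x : E)) ≤ ε') →
              |c φ - c ψ| ≤ ε') →
            ∃ γ ∈ EmbSub P Y Z n, ∀ η ∈ EmbSub P X Y n, ∀ η' ∈ EmbSub P X Y n,
              |c (γ.comp η) - c (γ.comp η')| ≤ ε) ↔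
      (∀ X Y : Submodule ℝ E, FiniteDimensional ℝ X → FiniteDimensional ℝ Y →
        ∀ ε : ℝ, 0 < ε →
        ∀ c : (X →ₗ[ℝ] E) → ℝ,
          (∀ φ ∈ EmbFull P X n, c φ ∈ Set.Icc (0 : ℝ) 1) →
          (∀ φ ∈ EmbFull P X n, ∀ ψ ∈ EmbFull P X n, ∀ ε' : ℝ,
            (∀ k < n, ∀ x : X, P k (x : E) ≤ 1 → P k (φ x - ψ x) ≤ ε') →
            |c φ - c ψ| ≤ ε') →
          ∃ γ ∈ EmbFull P Y n, ∀ η ∈ EmbSub P X Y n, ∀ η' ∈ EmbSub P X Y n,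
            |c (γ.comp η) - c (γ.comp η')| ≤ ε) := by
  classical
  constructor
  · -- (i) → (ii)
    intro H X Y fdX fdY ε hε c hb hlip
    obtain ⟨Z, fdZ, hZ⟩ := H X Y fdX fdY ε hε
    have hsub : ∀ (X' : Submodule ℝ E) (φ : X' →ₗ[ℝ] Z), φ ∈ EmbSub P X' Z n →
        Z.subtype.comp φ ∈ EmbFull P X' n := by
      intro X' φ hφ
      constructor
      · exact (Submodule.injective_subtype Z).comp hφ.1
      · intro k hk x
        simpa using hφ.2 k hk x
    obtain ⟨γ, hγ, hosc⟩ := hZ (fun φ => c (Z.subtype.comp φ))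
      (fun φ hφ => hb _ (hsub X φ hφ))
      (fun φ hφ ψ hψ ε' hprem => hlip _ (hsub X φ hφ) _ (hsub X ψ hψ) ε' (by
        intro k hk x hx
        simpa using hprem k hk x hx))
    refine ⟨Z.subtype.comp γ, hsub Y γ hγ, ?_⟩
    intro η hη η' hη'
    have e1 : (Z.subtype.comp γ).comp η = Z.subtype.comp (γ.comp η) :=
      (LinearMap.comp_assoc η γ Z.subtype)
    have e2 : (Z.subtype.comp γ).comp η' = Z.subtype.comp (γ.comp η') :=
      (LinearMap.comp_assoc η' γ Z.subtype)
    rw [e1, e2]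
    exact hosc η hη η' hη'
  · -- (ii) → (i)
    intro H X Y fdX fdY ε hε
    haveI := fdX
    haveI := fdY
    by_contra hcon
    push_neg at hcon
    -- for every finite-dimensional Z there is a bad colouring
    have hcon' : ∀ Z : Submodule ℝ E, FiniteDimensional ℝ Z →
        ∃ c : (X →ₗ[ℝ] Z) → ℝ,
          (∀ φ ∈ EmbSub P X Z n, c φ ∈ Set.Icc (0 : ℝ) 1) ∧
          (∀ φ ∈ EmbSub P X Z n, ∀ ψ ∈ EmbSub P X Z n, ∀ ε' : ℝ,
            (∀ k < n, ∀ x : X, P k (x : E) ≤ 1 → P k ((φ x : E) - (ψ x : E)) ≤ ε') →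
            |c φ - c ψ| ≤ ε') ∧
          (∀ γ ∈ EmbSub P Y Z n, ∃ η ∈ EmbSub P X Y n, ∃ η' ∈ EmbSub P X Y n,
            ε < |c (γ.comp η) - c (γ.comp η')|) := by
      intro Z hZ
      obtain ⟨c, hc1, hc2, hc3⟩ := hcon Z hZ
      exact ⟨c, hc1, hc2, hc3⟩
    let ι := {Z : Submodule ℝ E // FiniteDimensional ℝ Z}
    choose cfun hcb hclip hcbad using fun Z : ι => hcon' Z.1 Z.2
    haveI : Nonempty ι := ⟨⟨⊥, inferInstance⟩⟩
    -- an ultrafilter containing all tails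
    have hdir : Directed (fun a b : Filter ι => a ≥ b)
        (fun Z : ι => Filter.principal {W : ι | Z.1 ≤ W.1}) := by
      intro Z₁ Z₂
      haveI := Z₁.2; haveI := Z₂.2
      refine ⟨⟨Z₁.1 ⊔ Z₂.1, Submodule.finiteDimensional_sup _ _⟩, ?_, ?_⟩
      · refine Filter.principal_mono.mpr ?_
        intro W hW
        exact le_trans (le_sup_left : Z₁.1 ≤ Z₁.1 ⊔ Z₂.1) hW
      · refine Filter.principal_mono.mpr ?_
        intro W hW
        exact le_trans (le_sup_right : Z₂.1 ≤ Z₁.1 ⊔ Z₂.1) hW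
    haveI hFlne : (⨅ Z : ι, Filter.principal {W : ι | Z.1 ≤ W.1}).NeBot :=
      Filter.iInf_neBot_of_directed hdir
        (fun Z => Filter.principal_neBot_iff.mpr ⟨Z, le_refl Z.1⟩)
    obtain ⟨U, hU⟩ := Ultrafilter.exists_le (⨅ Z : ι, Filter.principal {W : ι | Z.1 ≤ W.1})
    have htail : ∀ Z₀ : Submodule ℝ E, FiniteDimensional ℝ Z₀ → {W : ι | Z₀ ≤ W.1} ∈ U := by
      intro Z₀ h₀
      exact hU (Filter.mem_iInf_of_mem ⟨Z₀, h₀⟩ (Filter.mem_principal_self _))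
    -- the clamping function
    let clamp : ℝ → ℝ := fun r => max 0 (min 1 r)
    have hclamp1 : ∀ r, clamp r ∈ Set.Icc (0 : ℝ) 1 :=
      fun r => ⟨le_max_left _ _, max_le (by norm_num) (min_le_left _ _)⟩
    have hclamp2 : ∀ a b : ℝ, |clamp a - clamp b| ≤ |a - b| := by
      intro a b
      calc |max 0 (min 1 a) - max 0 (min 1 b)| = |max (min 1 a) 0 - max (min 1 b) 0| := by
            rw [max_comm 0 (min 1 a), max_comm 0 (min 1 b)]
        _ ≤ |min 1 a - min 1 b| := abs_max_sub_max_le_abs _ _ _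
        _ ≤ max |1 - 1| |a - b| := abs_min_sub_min_le_max 1 a 1 b
        _ = |a - b| := by simp
    have hclamp3 : ∀ r : ℝ, r ∈ Set.Icc (0 : ℝ) 1 → clamp r = r := by
      intro r hr
      simp only [clamp]
      rw [min_eq_right hr.2, max_eq_right hr.1]
    -- the limit colouring
    let f : (X →ₗ[ℝ] E) → ι → ℝ := fun φ W =>
      if h : LinearMap.range φ ≤ W.1 then
        clamp (cfun W (LinearMap.codRestrict W.1 φ
          (fun x => h (LinearMap.mem_range_self φ x))))
      else 0
    have hficc : ∀ φ W, f φ W ∈ Set.Icc (0 : ℝ) 1 := by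
      intro φ W
      by_cases h : LinearMap.range φ ≤ W.1
      · simp only [f, dif_pos h]; exact hclamp1 _
      · simp only [f, dif_neg h]; norm_num
    have hex : ∀ φ : X →ₗ[ℝ] E, ∃ a ∈ Set.Icc (0 : ℝ) 1,
        Filter.Tendsto (f φ) ↑U (nhds a) := by
      intro φ
      have h1 : ↑(Ultrafilter.map (f φ) U) ≤ Filter.principal (Set.Icc (0 : ℝ) 1) := by
        rw [Filter.le_principal_iff]
        refine Filter.mem_map.mpr (Filter.univ_mem' ?_)
        intro W
        exact hficc φ W
      obtain ⟨a, ha, hta⟩ := isCompact_Icc.ultrafilter_le_nhds (Ultrafilter.map (f φ) U) h1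
      exact ⟨a, ha, hta⟩
    choose climit hicc hlim using hex
    -- corestrictions of embeddings are embeddings
    have hcod : ∀ (X' : Submodule ℝ E) (φ : X' →ₗ[ℝ] E), φ ∈ EmbFull P X' n →
        ∀ (W : Submodule ℝ E) (h : LinearMap.range φ ≤ W),
        LinearMap.codRestrict W φ (fun x => h (LinearMap.mem_range_self φ x))
          ∈ EmbSub P X' W n := by
      intro X' φ hφ W h
      constructor
      · intro a b hab
        apply hφ.1
        simpa [LinearMap.codRestrict_apply] using congrArg Subtype.val hab
      · intro k hk x
        simpa [LinearMap.codRestrict_apply] using hφ.2 k hk x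
    -- the limit colouring is Lipschitz
    have hlips : ∀ φ ∈ EmbFull P X n, ∀ ψ ∈ EmbFull P X n, ∀ ε' : ℝ,
        (∀ k < n, ∀ x : X, P k (x : E) ≤ 1 → P k (φ x - ψ x) ≤ ε') →
        |climit φ - climit ψ| ≤ ε' := by
      intro φ hφ ψ hψ ε' hprem
      haveI : FiniteDimensional ℝ (LinearMap.range φ ⊔ LinearMap.range ψ : Submodule ℝ E) :=
        Submodule.finiteDimensional_sup _ _
      have hm : {W : ι | LinearMap.range φ ⊔ LinearMap.range ψ ≤ W.1} ∈ U :=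
        htail _ inferInstance
      have hev : ∀ᶠ W in ↑U, |f φ W - f ψ W| ≤ ε' := by
        refine Filter.mem_of_superset hm ?_
        intro W hW
        have hφW : LinearMap.range φ ≤ W.1 := le_trans le_sup_left hW
        have hψW : LinearMap.range ψ ≤ W.1 := le_trans le_sup_right hW
        have e1 : f φ W = clamp (cfun W (LinearMap.codRestrict W.1 φ
            (fun x => hφW (LinearMap.mem_range_self φ x)))) := dif_pos hφW
        have e2 : f ψ W = clamp (cfun W (LinearMap.codRestrict W.1 ψ
            (fun x => hψW (LinearMap.mem_range_self ψ x)))) := dif_pos hψW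
        show |f φ W - f ψ W| ≤ ε'
        rw [e1, e2]
        refine le_trans (hclamp2 _ _) ?_
        refine hclip W _ (hcod X φ hφ W.1 hφW) _ (hcod X ψ hψ W.1 hψW) ε' ?_
        intro k hk x hx
        simpa [LinearMap.codRestrict_apply] using hprem k hk x hx
      exact le_of_tendsto (((hlim φ).sub (hlim ψ)).abs) hev
    -- apply the infinite Ramsey property
    obtain ⟨γ, hγ, hosc⟩ := H X Y fdX fdY (ε/2) (by linarith) climit
      (fun φ _ => hicc φ) hlips
    -- the seminorm and the net
    obtain ⟨V₀, q, hV₀mem, hqlb, hqub⟩ := stmt11_qsem_exists P n X Y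
    let S₀ : Set V₀ := {T | (T : X →ₗ[ℝ] Y) ∈ EmbSub P X Y n}
    have hB : ∀ s ∈ S₀, ∀ t ∈ S₀, q (s - t) ≤ 2 := by
      intro s hs t ht
      refine hqub _ 2 (by norm_num) ?_
      intro k hk x hx
      have e : ((s - t).1 x : E) = (s.1 x : E) - (t.1 x : E) := by
        simp [LinearMap.sub_apply]
      rw [e]
      calc P k ((s.1 x : E) - (t.1 x : E)) ≤ P k ((s.1 x : E)) + P k ((t.1 x : E)) := by
            simpa [sub_eq_add_neg] using
              map_add_le_add (P k) ((s.1 x : E)) (-(t.1 x : E)) |>.trans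
                (by rw [map_neg_eq_map])
        _ = P k (x : E) + P k (x : E) := by rw [hs.2 k hk x, ht.2 k hk x]
        _ ≤ 2 := by linarith [hx]
    obtain ⟨F, hFfin, hFS, hFnet⟩ := stmt11_netlemma q S₀ hB (show (0:ℝ) < ε/8 by linarith)
    -- composition of embeddings
    have hcomp : ∀ (W : Submodule ℝ E) (γ' : Y →ₗ[ℝ] W), γ' ∈ EmbSub P Y W n →
        ∀ η : X →ₗ[ℝ] Y, η ∈ EmbSub P X Y n → γ'.comp η ∈ EmbSub P X W n := by
      intro W γ' hγ' η hη
      constructor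
      · exact hγ'.1.comp hη.1
      · intro k hk x
        show P k ((γ' (η x) : E)) = P k (x : E)
        rw [hγ'.2 k hk (η x), hη.2 k hk x]
    haveI : FiniteDimensional ℝ (LinearMap.range γ : Submodule ℝ E) := inferInstance
    -- for each large W, a bad pair from the net
    have key : ∀ W : ι, LinearMap.range γ ≤ W.1 → ∃ t ∈ F, ∃ t' ∈ F,
        ε - ε/4 < |f (γ.comp (t : X →ₗ[ℝ] Y)) W - f (γ.comp (t' : X →ₗ[ℝ] Y)) W| := by
      intro W hW
      set γW : Y →ₗ[ℝ] W.1 := LinearMap.codRestrict W.1 γ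
        (fun y => hW (LinearMap.mem_range_self γ y)) with hγWdef
      have hγW : γW ∈ EmbSub P Y W.1 n := hcod Y γ hγ W.1 hW
      obtain ⟨η, hη, η', hη', hbig⟩ := hcbad W γW hγW
      obtain ⟨t, htF, hqt⟩ := hFnet ⟨η, hV₀mem η hη⟩ hη
      obtain ⟨t', ht'F, hqt'⟩ := hFnet ⟨η', hV₀mem η' hη'⟩ hη'
      -- distance bounds via the Lipschitz property of cfun W
      have hd : ∀ (η₁ : X →ₗ[ℝ] Y) (hη₁ : η₁ ∈ EmbSub P X Y n) (t₁ : V₀) (ht₁ : t₁ ∈ F),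
          q (⟨η₁, hV₀mem η₁ hη₁⟩ - t₁) ≤ ε/8 →
          |cfun W (γW.comp η₁) - cfun W (γW.comp (t₁ : X →ₗ[ℝ] Y))| ≤ ε/8 := by
        intro η₁ hη₁ t₁ ht₁ hq₁
        refine hclip W _ (hcomp W.1 γW hγW η₁ hη₁) _
          (hcomp W.1 γW hγW (t₁ : X →ₗ[ℝ] Y) (hFS t₁ ht₁)) (ε/8) ?_
        intro k hk x hx
        have e1 : ((γW.comp η₁) x : E) = γ (η₁ x) := rfl
        have e2 : ((γW.comp (t₁ : X →ₗ[ℝ] Y)) x : E) = γ ((t₁ : X →ₗ[ℝ] Y) x) := rfl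
        rw [e1, e2, ← map_sub γ]
        have e3 : P k (γ (η₁ x - (t₁ : X →ₗ[ℝ] Y) x)) =
            P k ((η₁ x - (t₁ : X →ₗ[ℝ] Y) x : Y) : E) := hγ.2 k hk _
        rw [e3]
        have e4 : (((⟨η₁, hV₀mem η₁ hη₁⟩ : V₀) - t₁).1 x : E) =
            ((η₁ x - (t₁ : X →ₗ[ℝ] Y) x : Y) : E) := by
          simp [LinearMap.sub_apply]
        calc P k ((η₁ x - (t₁ : X →ₗ[ℝ] Y) x : Y) : E)
            = P k ((((⟨η₁, hV₀mem η₁ hη₁⟩ : V₀) - t₁).1 x : E)) := by rw [e4]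
          _ ≤ q (⟨η₁, hV₀mem η₁ hη₁⟩ - t₁) := hqlb _ k hk x hx
          _ ≤ ε/8 := hq₁
      have hdt := hd η hη t htF hqt
      have hdt' := hd η' hη' t' ht'F hqt'
      -- identification of f values
      have hfc : ∀ t₁ : V₀, (t₁ : X →ₗ[ℝ] Y) ∈ EmbSub P X Y n →
          f (γ.comp (t₁ : X →ₗ[ℝ] Y)) W = cfun W (γW.comp (t₁ : X →ₗ[ℝ] Y)) := by
        intro t₁ ht₁
        have hr : LinearMap.range (γ.comp (t₁ : X →ₗ[ℝ] Y)) ≤ W.1 :=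
          le_trans (LinearMap.range_comp_le_range _ _) hW
        have e5 : f (γ.comp (t₁ : X →ₗ[ℝ] Y)) W =
            clamp (cfun W (LinearMap.codRestrict W.1 (γ.comp (t₁ : X →ₗ[ℝ] Y))
              (fun x => hr (LinearMap.mem_range_self _ x)))) := dif_pos hr
        have e6 : LinearMap.codRestrict W.1 (γ.comp (t₁ : X →ₗ[ℝ] Y))
            (fun x => hr (LinearMap.mem_range_self _ x)) = γW.comp (t₁ : X →ₗ[ℝ] Y) := by
          ext x
          rfl
        rw [e5, e6]
        exact hclamp3 _ (hcb W _ (hcomp W.1 γW hγW _ ht₁))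
      refine ⟨t, htF, t', ht'F, ?_⟩
      rw [hfc t (hFS t htF), hfc t' (hFS t' ht'F)]
      have habs : |cfun W (γW.comp η) - cfun W (γW.comp η')| ≤
          |cfun W (γW.comp (t : X →ₗ[ℝ] Y)) - cfun W (γW.comp (t' : X →ₗ[ℝ] Y))|
            + ε/8 + ε/8 := by
        have := abs_sub_abs_le_abs_sub (cfun W (γW.comp η)) (cfun W (γW.comp η'))
        calc |cfun W (γW.comp η) - cfun W (γW.comp η')|
            ≤ |cfun W (γW.comp η) - cfun W (γW.comp (t : X →ₗ[ℝ] Y))|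
              + |cfun W (γW.comp (t : X →ₗ[ℝ] Y)) - cfun W (γW.comp (t' : X →ₗ[ℝ] Y))|
              + |cfun W (γW.comp (t' : X →ₗ[ℝ] Y)) - cfun W (γW.comp η')| := by
              have h1 := abs_sub_le (cfun W (γW.comp η)) (cfun W (γW.comp (t : X →ₗ[ℝ] Y)))
                (cfun W (γW.comp η'))
              have h2 := abs_sub_le (cfun W (γW.comp (t : X →ₗ[ℝ] Y)))
                (cfun W (γW.comp (t' : X →ₗ[ℝ] Y))) (cfun W (γW.comp η'))
              linarith
        _ ≤ ε/8 + |cfun W (γW.comp (t : X →ₗ[ℝ] Y)) - cfun W (γW.comp (t' : X →ₗ[ℝ] Y))|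
              + ε/8 := by
              have h3 : |cfun W (γW.comp (t' : X →ₗ[ℝ] Y)) - cfun W (γW.comp η')| =
                  |cfun W (γW.comp η') - cfun W (γW.comp (t' : X →ₗ[ℝ] Y))| := abs_sub_comm _ _
              rw [h3] at *
              linarith
        _ = |cfun W (γW.comp (t : X →ₗ[ℝ] Y)) - cfun W (γW.comp (t' : X →ₗ[ℝ] Y))|
              + ε/8 + ε/8 := by ring
      have := hbig
      linarith
    -- pigeonhole on the finitely many net pairs
    have htailγ : {W : ι | LinearMap.range γ ≤ W.1} ∈ U := htail _ inferInstance
    have hcover : {W : ι | LinearMap.range γ ≤ W.1} ⊆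
        ⋃ p ∈ F ×ˢ F, {W : ι |
          ε - ε/4 < |f (γ.comp ((p.1 : V₀) : X →ₗ[ℝ] Y)) W
            - f (γ.comp ((p.2 : V₀) : X →ₗ[ℝ] Y)) W|} := by
      intro W hW
      obtain ⟨t, htF, t', ht'F, hlt⟩ := key W hW
      refine Set.mem_iUnion₂.mpr ⟨(t, t'), Set.mem_prod.mpr ⟨htF, ht'F⟩, ?_⟩
      exact hlt
    have hun : (⋃ p ∈ F ×ˢ F, {W : ι |
          ε - ε/4 < |f (γ.comp ((p.1 : V₀) : X →ₗ[ℝ] Y)) W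
            - f (γ.comp ((p.2 : V₀) : X →ₗ[ℝ] Y)) W|}) ∈ U :=
      Filter.mem_of_superset htailγ hcover
    obtain ⟨p, hpF, hpU⟩ := (Ultrafilter.finite_biUnion_mem_iff (hFfin.prod hFfin)).mp hun
    obtain ⟨hp1, hp2⟩ := Set.mem_prod.mp hpF
    have hle2 := hosc ((p.1 : V₀) : X →ₗ[ℝ] Y) (hFS p.1 hp1)
      ((p.2 : V₀) : X →ₗ[ℝ] Y) (hFS p.2 hp2)
    have htd : Filter.Tendsto
        (fun W => |f (γ.comp ((p.1 : V₀) : X →ₗ[ℝ] Y)) W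
          - f (γ.comp ((p.2 : V₀) : X →ₗ[ℝ] Y)) W|) ↑U
        (nhds |climit (γ.comp ((p.1 : V₀) : X →ₗ[ℝ] Y))
          - climit (γ.comp ((p.2 : V₀) : X →ₗ[ℝ] Y))|) :=
      ((hlim _).sub (hlim _)).abs
    have hge : ε - ε/4 ≤ |climit (γ.comp ((p.1 : V₀) : X →ₗ[ℝ] Y))
        - climit (γ.comp ((p.2 : V₀) : X →ₗ[ℝ] Y))| := by
      refine ge_of_tendsto htd ?_
      refine Filter.mem_of_superset hpU ?_
      intro W hW
      have hW' : ε - ε/4 < |f (γ.comp ((p.1 : V₀) : X →ₗ[ℝ] Y)) W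
          - f (γ.comp ((p.2 : V₀) : X →ₗ[ℝ] Y)) W| := hW
      exact hW'.le
    linarith
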